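/- For every real c > 0, the quantity ω^h(c) = sup_{t∈(0,1)} [ (c/6)·t² − (c/3)·t − (1−t)·ln 2 + ln(3 − e^{−2ct/3}) ] is strictly positive. (Thus the exponent of the expected DPLL-GUC search-tree size for 3-coloring random graphs is positive at every average degree c.) -/
import Mathlib


/-- ω^h(c) = sup_{t∈(0,1)} [ (c/6)·t² − (c/3)·t − (1−t)·ln 2 + ln(3 − e^{−2ct/3}) ] -/
noncomputable def omegaH (c : ℝ) : ℝ :=
  sSup ((fun t => (c / 6) * t ^ 2 - (c / 3) * t - (1 - t) * Real.log 2 +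
      Real.log (3 - Real.exp (-2 * c * t / 3))) '' Set.Ioo (0 : ℝ) 1)

/-- For `x ≥ 0`, `exp (-x) ≤ 1 - x + x²/2`. -/
lemma exp_neg_le_quadratic (x : ℝ) (hx0 : 0 ≤ x) :
    Real.exp (-x) ≤ 1 - x + x ^ 2 / 2 := by
  have hq : 1 + x + x ^ 2 / 2 ≤ Real.exp x := Real.quadratic_le_exp_of_nonneg hx0
  have hep : 0 < Real.exp x := Real.exp_pos x
  rw [Real.exp_neg, inv_eq_one_div, div_le_iff₀ hep]
  nlinarith [sq_nonneg x, sq_nonneg (x^2)]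

/-- For `u ≥ 0`, `u - u² ≤ log (1 + u)`. -/
lemma log_one_add_ge (u : ℝ) (hu : 0 ≤ u) : u - u ^ 2 ≤ Real.log (1 + u) := by
  have hpos : (0:ℝ) < 1 + u := by linarith
  have h := Real.log_le_sub_one_of_pos (show (0:ℝ) < (1 + u)⁻¹ by positivity)
  rw [Real.log_inv] at h
  have hlog : 1 - (1 + u)⁻¹ ≤ Real.log (1 + u) := by linarith
  have hinv : (1 + u)⁻¹ ≤ 1 - u + u ^ 2 := by
    rw [inv_eq_one_div, div_le_iff₀ hpos]
    nlinarith
  linarith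

/-- Key lower bound: for `0 ≤ x ≤ 2/3`,
    `log 2 + x/2 - x²/2 ≤ log (3 - exp (-x))`. -/
lemma key_ineq (x : ℝ) (hx0 : 0 ≤ x) (hx : x ≤ 2/3) :
    Real.log 2 + x / 2 - x ^ 2 / 2 ≤ Real.log (3 - Real.exp (-x)) := by
  have hA := exp_neg_le_quadratic x hx0
  obtain ⟨u, hu⟩ : ∃ u : ℝ, u = x / 2 - x ^ 2 / 4 := ⟨_, rfl⟩
  have hu0 : 0 ≤ u := by
    rw [hu]; nlinarith [mul_nonneg hx0 (show (0:ℝ) ≤ 2 - x by linarith)]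
  have hux : u ≤ x / 2 := by rw [hu]; nlinarith [sq_nonneg x]
  have hu2 : u ^ 2 ≤ x ^ 2 / 4 := by nlinarith [pow_le_pow_left₀ hu0 hux 2]
  have h2u : (2:ℝ) * (1 + u) = 2 + x - x ^ 2 / 2 := by rw [hu]; ring
  have hpos : (0:ℝ) < 1 + u := by linarith
  have hstep : 2 * (1 + u) ≤ 3 - Real.exp (-x) := by
    rw [h2u]; linarith
  have hlog1 : Real.log (2 * (1 + u)) ≤ Real.log (3 - Real.exp (-x)) :=
    Real.log_le_log (by positivity) hstep
  have hlog2 : Real.log (2 * (1 + u)) = Real.log 2 + Real.log (1 + u) := by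
    rw [Real.log_mul (by norm_num) (ne_of_gt hpos)]
  have hlog3 := log_one_add_ge u hu0
  have hfin : x / 2 - x ^ 2 / 2 ≤ u - u ^ 2 := by rw [hu] at hu2 ⊢; nlinarith
  linarith

theorem omegaH_pos (c : ℝ) (hc : 0 < c) : 0 < omegaH c := by
  set f : ℝ → ℝ := fun t => (c / 6) * t ^ 2 - (c / 3) * t - (1 - t) * Real.log 2 +
      Real.log (3 - Real.exp (-2 * c * t / 3)) with hf
  set t : ℝ := min (1/2) (1/c^2) with htdef
  have ht0 : 0 < t := lt_min (by norm_num) (by positivity)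
  have ht1 : t < 1 := lt_of_le_of_lt (min_le_left _ _) (by norm_num)
  have htle : t ≤ 1/2 := min_le_left _ _
  have hc2t : c ^ 2 * t ≤ 1 := by
    have h2 : t ≤ 1/c^2 := min_le_right _ _
    have hcp : (0:ℝ) < c^2 := by positivity
    rw [le_div_iff₀ hcp] at h2
    linarith [mul_comm (c^2) t ▸ h2]
  have hct : c * t ≤ 1 := by
    rcases le_total c 1 with h | h
    · nlinarith
    · nlinarith
  have htmem : t ∈ Set.Ioo (0:ℝ) 1 := ⟨ht0, ht1⟩
  -- bounded above
  have hbdd : BddAbove (f '' Set.Ioo (0:ℝ) 1) := by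
    refine ⟨c / 6 + Real.log 3, ?_⟩
    rintro y ⟨s, ⟨hs0, hs1⟩, rfl⟩
    have he1 : Real.exp (-2 * c * s / 3) ≤ 1 := by
      apply Real.exp_le_one_iff.mpr; nlinarith
    have he0 : 0 < Real.exp (-2 * c * s / 3) := Real.exp_pos _
    have hlog : Real.log (3 - Real.exp (-2 * c * s / 3)) ≤ Real.log 3 :=
      Real.log_le_log (by linarith) (by linarith)
    have hlog2 : 0 < Real.log 2 := Real.log_pos (by norm_num)
    have hs2 : s ^ 2 ≤ 1 := by nlinarith
    have hsq : (c/6) * s^2 ≤ c/6 := by nlinarith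
    simp only [hf]
    nlinarith
  -- value at t is positive
  have hx0 : 0 ≤ 2 * c * t / 3 := by positivity
  have hx23 : 2 * c * t / 3 ≤ 2/3 := by nlinarith
  have hkey := key_ineq (2 * c * t / 3) hx0 hx23
  have hnegeq : -(2 * c * t / 3) = -2 * c * t / 3 := by ring
  rw [hnegeq] at hkey
  have hlog2 : 0.6931471803 < Real.log 2 := by
    have := Real.log_two_gt_d9; linarith
  have hft : 0 < f t := by
    simp only [hf]
    have h1 : t * (c ^ 2 * t) ≤ t * 1 := mul_le_mul_of_nonneg_left hc2t ht0.le
    nlinarith [mul_pos ht0 (sub_pos.mpr ht1), sq_nonneg t,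
      mul_nonneg hc.le (sq_nonneg t)]
  have hle : f t ≤ omegaH c := le_csSup hbdd ⟨t, htmem, rfl⟩
  linarith
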